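/- Let r, h > 0 and define γ : ℝ → ℝ³ by γ(s) = e^{φ(s)}·(r·cos φ(s), r·sin φ(s), h), where φ(s) = h·s/√(2r² + h²). Then γ has hyperbolic unit speed, and ⟨γ'(s), γ(s)⟩_{H,γ(s)}/‖γ(s)‖_{H,γ(s)} = √(r² + h²)/√(2r² + h²) for all s; that is, γ makes a constant hyperbolic angle θ with the hyperbolic-rotation Killing field V(p) = p, where cos θ = √(r² + h²)/√(2r² + h²). -/

import Mathlib

open Real
open scoped RealInnerProductSpace

/-- A point/vector of Euclidean 3-space. -/
noncomputable def v3 (x y z : ℝ) : EuclideanSpace ℝ (Fin 3) := !₂[x, y, z]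

/-- Hyperbolic (upper half-space) inner product of u and v at the point p. -/
noncomputable def hInner (p u v : EuclideanSpace ℝ (Fin 3)) : ℝ := ⟪u, v⟫ / (p 2) ^ 2

/-- Hyperbolic (upper half-space) norm of v at the point p. -/
noncomputable def hNorm (p v : EuclideanSpace ℝ (Fin 3)) : ℝ := ‖v‖ / p 2

/-- Covariant acceleration ∇_{γ'}γ' of a hyperbolic unit-speed curve in the
upper half-space model: A(s) = γ''(s) − (2γ₃'(s)/γ₃(s))·γ'(s) + (‖γ'(s)‖ₑ²/γ₃(s))·e₃. -/
noncomputable def hAccel (γ : ℝ → EuclideanSpace ℝ (Fin 3)) (s : ℝ) :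
    EuclideanSpace ℝ (Fin 3) :=
  deriv (deriv γ) s - (2 * deriv (fun t => γ t 2) s / γ s 2) • deriv γ s
    + (‖deriv γ s‖ ^ 2 / γ s 2) • v3 0 0 1


/-- The curve γ(s) = e^{φ(s)}·(r cos φ(s), r sin φ(s), h), with
φ(s) = hs/√(2r² + h²), has hyperbolic unit speed and makes the constant hyperbolic angle θ,
cos θ = √(r² + h²)/√(2r² + h²), with the hyperbolic-rotation Killing field V(p) = p. -/
theorem stmt_17 (r h : ℝ) (hr : 0 < r) (hh : 0 < h)
    (φ : ℝ → ℝ) (hφ : φ = fun s => h * s / Real.sqrt (2 * r ^ 2 + h ^ 2))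
    (γ : ℝ → EuclideanSpace ℝ (Fin 3))
    (hγ : γ = fun s => Real.exp (φ s) •
        v3 (r * Real.cos (φ s)) (r * Real.sin (φ s)) h) :
    (∀ s, ‖deriv γ s‖ = γ s 2) ∧
    (∀ s, hInner (γ s) (deriv γ s) (γ s) / hNorm (γ s) (γ s)
        = Real.sqrt (r ^ 2 + h ^ 2) / Real.sqrt (2 * r ^ 2 + h ^ 2)) := by
  have hcpos0 : (0:ℝ) < 2 * r ^ 2 + h ^ 2 := by positivity
  set c := Real.sqrt (2 * r ^ 2 + h ^ 2) with hcdef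
  have hc : 0 < c := Real.sqrt_pos.2 hcpos0
  have hc2 : c ^ 2 = 2 * r ^ 2 + h ^ 2 := Real.sq_sqrt hcpos0.le
  have hφ' : ∀ s, HasDerivAt φ (h / c) s := by
    intro s
    rw [hφ]
    simpa using ((hasDerivAt_id s).const_mul h).div_const c
  have hx : ∀ s, HasDerivAt (fun s => Real.exp (φ s) * (r * Real.cos (φ s)))
      (Real.exp (φ s) * (h / c) * (r * (Real.cos (φ s) - Real.sin (φ s)))) s := by
    intro s
    have : HasDerivAt (fun s => Real.exp (φ s) * (r * Real.cos (φ s))) _ s :=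
      (hφ' s).exp.mul (((hφ' s).cos).const_mul r)
    convert this using 1
    ring
  have hy : ∀ s, HasDerivAt (fun s => Real.exp (φ s) * (r * Real.sin (φ s)))
      (Real.exp (φ s) * (h / c) * (r * (Real.sin (φ s) + Real.cos (φ s)))) s := by
    intro s
    have : HasDerivAt (fun s => Real.exp (φ s) * (r * Real.sin (φ s))) _ s :=
      (hφ' s).exp.mul (((hφ' s).sin).const_mul r)
    convert this using 1
    ring
  have hz : ∀ s, HasDerivAt (fun s => Real.exp (φ s) * h)
      (Real.exp (φ s) * (h / c) * h) s := by
    intro s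
    exact ((hφ' s).exp).mul_const h
  have hγfun : γ = fun s =>
      (Real.exp (φ s) * (r * Real.cos (φ s))) • v3 1 0 0
    + (Real.exp (φ s) * (r * Real.sin (φ s))) • v3 0 1 0
    + (Real.exp (φ s) * h) • v3 0 0 1 := by
    rw [hγ]
    funext s
    ext i
    fin_cases i <;> simp [v3]
  have hD : ∀ s, HasDerivAt γ
      ((Real.exp (φ s) * (h / c) * (r * (Real.cos (φ s) - Real.sin (φ s)))) • v3 1 0 0
     + (Real.exp (φ s) * (h / c) * (r * (Real.sin (φ s) + Real.cos (φ s)))) • v3 0 1 0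
     + (Real.exp (φ s) * (h / c) * h) • v3 0 0 1) s := by
    intro s
    rw [hγfun]
    exact (((hx s).smul_const _).add ((hy s).smul_const _)).add ((hz s).smul_const _)
  have hderiv : ∀ s, deriv γ s =
      ((Real.exp (φ s) * (h / c) * (r * (Real.cos (φ s) - Real.sin (φ s)))) • v3 1 0 0
     + (Real.exp (φ s) * (h / c) * (r * (Real.sin (φ s) + Real.cos (φ s)))) • v3 0 1 0
     + (Real.exp (φ s) * (h / c) * h) • v3 0 0 1) := fun s => (hD s).deriv
  have hγ2 : ∀ s, γ s 2 = Real.exp (φ s) * h := by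
    intro s; rw [hγ]; simp [v3]
  have hpyth : ∀ s, Real.sin (φ s) ^ 2 + Real.cos (φ s) ^ 2 = 1 :=
    fun s => Real.sin_sq_add_cos_sq (φ s)
  have hnorm1 : ∀ s, ‖deriv γ s‖ = Real.exp (φ s) * h := by
    intro s
    rw [hderiv, EuclideanSpace.norm_eq]
    rw [Fin.sum_univ_three]
    simp only [v3, PiLp.add_apply, PiLp.smul_apply, Matrix.cons_val_zero,
      Matrix.cons_val_one, Matrix.head_cons, Matrix.cons_val_two, Matrix.tail_cons,
      smul_eq_mul, Real.norm_eq_abs, sq_abs, mul_one, mul_zero, add_zero, zero_add]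
    have key : (Real.exp (φ s) * (h / c) * (r * (Real.cos (φ s) - Real.sin (φ s)))) ^ 2
        + (Real.exp (φ s) * (h / c) * (r * (Real.sin (φ s) + Real.cos (φ s)))) ^ 2
        + (Real.exp (φ s) * (h / c) * h) ^ 2 = (Real.exp (φ s) * h) ^ 2 := by
      have hp := hpyth s
      have hE : (h / c) ^ 2 * c ^ 2 = h ^ 2 := by field_simp
      linear_combination Real.exp (φ s) ^ 2 * (h / c) ^ 2 * (2 * r ^ 2) * hp
        - Real.exp (φ s) ^ 2 * (h / c) ^ 2 * hc2 + Real.exp (φ s) ^ 2 * hE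
    rw [key, Real.sqrt_sq (by positivity)]
  refine ⟨fun s => by rw [hnorm1 s, hγ2 s], fun s => ?_⟩
  have hRpos : (0:ℝ) < r ^ 2 + h ^ 2 := by positivity
  set R := Real.sqrt (r ^ 2 + h ^ 2) with hRdef
  have hR : 0 < R := Real.sqrt_pos.2 hRpos
  have hR2 : R ^ 2 = r ^ 2 + h ^ 2 := Real.sq_sqrt hRpos.le
  have hexp : 0 < Real.exp (φ s) := Real.exp_pos _
  have hinn : ⟪deriv γ s, γ s⟫ = Real.exp (φ s) ^ 2 * (h / c) * (r ^ 2 + h ^ 2) := by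
    rw [hderiv, hγ]
    simp only [v3, PiLp.inner_apply, RCLike.inner_apply, conj_trivial, Fin.sum_univ_three,
      PiLp.add_apply, PiLp.smul_apply, Matrix.cons_val_zero, Matrix.cons_val_one,
      Matrix.head_cons, Matrix.cons_val_two, Matrix.tail_cons, smul_eq_mul,
      mul_one, mul_zero, add_zero, zero_add]
    have hp := hpyth s
    linear_combination Real.exp (φ s) ^ 2 * (h / c) * r ^ 2 * hp
  have hnormγ : ‖γ s‖ = Real.exp (φ s) * R := by
    rw [hγ, EuclideanSpace.norm_eq, Fin.sum_univ_three]
    simp only [v3, PiLp.smul_apply, Matrix.cons_val_zero, Matrix.cons_val_one,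
      Matrix.head_cons, Matrix.cons_val_two, Matrix.tail_cons, smul_eq_mul,
      Real.norm_eq_abs, sq_abs]
    have hp := hpyth s
    have key : (Real.exp (φ s) * (r * Real.cos (φ s))) ^ 2
        + (Real.exp (φ s) * (r * Real.sin (φ s))) ^ 2
        + (Real.exp (φ s) * h) ^ 2 = (Real.exp (φ s) * R) ^ 2 := by
      linear_combination Real.exp (φ s) ^ 2 * r ^ 2 * hp - Real.exp (φ s) ^ 2 * hR2
    rw [key, Real.sqrt_sq (by positivity)]
  rw [hInner, hNorm, hinn, hnormγ, hγ2 s]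
  rw [← hR2]
  field_simp
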